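/- Let K be a finite p-group with an elementary abelian normal subgroup A of index p, and let y, z ∈ K \ A with Φ(K)z = Φ(K)y. Then z^p = y^p. -/

import Mathlib

open Subgroup
open scoped commutatorElement

private lemma myIsCoatom {p : ℕ} (hp : p.Prime) {K : Type*} [Group K] [Finite K]
    {A : Subgroup K} (hAindex : A.index = p) : IsCoatom A := by
  constructor
  · intro h
    rw [h, Subgroup.index_top] at hAindex
    exact hp.ne_one hAindex.symm
  · intro B hB
    have h1 : B.index ∣ p := hAindex ▸ Subgroup.index_dvd_of_le hB.le
    have h2 : B.index < p := hAindex ▸ Subgroup.index_strictAnti hB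
    rcases (Nat.dvd_prime hp).1 h1 with h | h
    · exact Subgroup.index_eq_one.mp h
    · omega

private lemma frattini_eq_bot_of_elemAb {p : ℕ} (hp : p.Prime) {E : Type*} [Group E]
    [Finite E] (hcomm : ∀ a b : E, a * b = b * a) (hE : ∀ x : E, x ^ p = 1) :
    frattini E = ⊥ := by
  rw [eq_bot_iff]
  intro g hg
  rw [Subgroup.mem_bot]
  by_contra hne
  -- find a subgroup maximal with respect to not containing g
  haveI : Finite (Subgroup E) := Finite.of_injective _ SetLike.coe_injective
  obtain ⟨M, hM, hMmax⟩ := Set.Finite.exists_maximalFor id {M : Subgroup E | g ∉ M}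
    (Set.toFinite _) ⟨⊥, by simpa using hne⟩
  simp only [id] at hMmax
  simp only [Set.mem_setOf_eq] at hM
  -- decomposition of membership in M ⊔ zpowers x
  have hdec : ∀ (x e : E), e ∈ M ⊔ Subgroup.zpowers x → ∃ m ∈ M, ∃ k : ℤ, m * x ^ k = e := by
    intro x e he
    have hle : M ⊔ Subgroup.zpowers x ≤
        { carrier := {e : E | ∃ m ∈ M, ∃ k : ℤ, m * x ^ k = e}
          one_mem' := ⟨1, M.one_mem, 0, by simp⟩
          mul_mem' := by
            rintro a b ⟨m, hm, k, rfl⟩ ⟨m', hm', k', rfl⟩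
            refine ⟨m * m', M.mul_mem hm hm', k + k', ?_⟩
            rw [zpow_add]
            calc m * m' * (x ^ k * x ^ k') = m * (m' * x ^ k) * x ^ k' := by
                  simp [mul_assoc]
              _ = m * (x ^ k * m') * x ^ k' := by rw [hcomm m' (x ^ k)]
              _ = m * x ^ k * (m' * x ^ k') := by simp [mul_assoc]
          inv_mem' := by
            rintro a ⟨m, hm, k, rfl⟩
            refine ⟨m⁻¹, M.inv_mem hm, -k, ?_⟩
            rw [mul_inv_rev, zpow_neg, hcomm]
        } := by
      apply sup_le
      · intro m hm; exact ⟨m, hm, 0, by simp⟩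
      · intro e' he'
        obtain ⟨k, rfl⟩ := Subgroup.mem_zpowers_iff.mp he'
        exact ⟨1, M.one_mem, k, by simp⟩
    exact hle he
  -- every subgroup strictly above M contains g
  have hgmem : ∀ x : E, x ∉ M → g ∈ M ⊔ Subgroup.zpowers x := by
    intro x hx
    by_contra hgx
    have h1 : M ≤ M ⊔ Subgroup.zpowers x := le_sup_left
    have h2 := hMmax hgx h1
    exact hx (h2 (Subgroup.mem_sup_right (Subgroup.mem_zpowers x)))
  -- M ⊔ zpowers g = ⊤
  have hMg : M ⊔ Subgroup.zpowers g = ⊤ := by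
    by_contra hMgtop
    obtain ⟨x, hx⟩ : ∃ x : E, x ∉ M ⊔ Subgroup.zpowers g := by
      by_contra hall
      push_neg at hall
      exact hMgtop ((Subgroup.eq_top_iff' _).mpr hall)
    have hxM : x ∉ M := fun h => hx (Subgroup.mem_sup_left h)
    obtain ⟨m, hm, k, hk⟩ := hdec x g (hgmem x hxM)
    -- reduce the exponent mod p
    have hx1 : x ≠ 1 := fun h => hxM (h ▸ M.one_mem)
    haveI := Fact.mk hp
    have hord : orderOf x = p := orderOf_eq_prime (hE x) hx1
    set k' : ℕ := (k % (p : ℤ)).toNat with hk'def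
    have hpples : (0:ℤ) < (p:ℤ) := by exact_mod_cast hp.pos
    have hknn : (0:ℤ) ≤ k % (p:ℤ) := Int.emod_nonneg k (by omega)
    have hklt : k % (p:ℤ) < (p:ℤ) := Int.emod_lt_of_pos k hpples
    have hxk : x ^ k = x ^ k' := by
      rw [← zpow_natCast, hk'def, Int.toNat_of_nonneg hknn, ← hord, zpow_mod_orderOf]
    have hk'lt : k' < p := by omega
    have hk'0 : k' ≠ 0 := by
      intro h0
      apply hM
      have : g = m := by
        rw [← hk, hxk, h0, pow_zero, mul_one]
      exact this ▸ hm
    -- Bezout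
    have hnd : ¬ p ∣ k' := fun hdvd => by
      have := Nat.le_of_dvd (Nat.pos_of_ne_zero hk'0) hdvd; omega
    have hcop : Nat.gcd k' p = 1 := (Nat.coprime_comm.mp ((Nat.Prime.coprime_iff_not_dvd hp).mpr hnd))
    have hbez : (1:ℤ) = k' * Nat.gcdA k' p + p * Nat.gcdB k' p := by
      rw [← Nat.gcd_eq_gcd_ab k' p, hcop]; norm_num
    have hxp2 : (x : E) ^ (p:ℤ) = 1 := by
      rw [zpow_natCast]; exact hE x
    have hxeq : x = (x ^ k') ^ (Nat.gcdA k' p) := by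
      conv_lhs => rw [← zpow_one x, hbez]
      rw [zpow_add, zpow_mul, zpow_mul, zpow_natCast, hxp2, one_zpow, mul_one]
    -- so x ∈ M ⊔ zpowers g, contradiction
    apply hx
    have hxk'mem : x ^ k' ∈ M ⊔ Subgroup.zpowers g := by
      have : x ^ k' = m⁻¹ * g := by
        rw [← hxk]
        rw [← hk]; group
      rw [this]
      exact mul_mem (Subgroup.mem_sup_left (M.inv_mem hm)) (Subgroup.mem_sup_right (Subgroup.mem_zpowers g))
    rw [hxeq]
    exact zpow_mem hxk'mem _
  -- M is a coatom
  have hcoatom : IsCoatom M := by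
    constructor
    · intro h; exact hM (h ▸ Subgroup.mem_top g)
    · intro B hB
      obtain ⟨x, hxB, hxM⟩ := SetLike.exists_of_lt hB
      have hgB : g ∈ B := by
        have := hgmem x hxM
        exact (sup_le hB.le (Subgroup.zpowers_le.mpr hxB)) this
      have : M ⊔ Subgroup.zpowers g ≤ B := sup_le hB.le (Subgroup.zpowers_le.mpr hgB)
      rw [hMg] at this
      exact top_unique this
  exact hM (frattini_le_coatom hcoatom hg)

/-- Let `K` be a finite `p`-group with an elementary abelian normal
subgroup `A` of index `p`, and let `y, z ∈ K \ A` with `Φ(K)z = Φ(K)y`.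
Then `z ^ p = y ^ p`. -/
theorem frattini_coset_eq_imp_pow_eq
    {p : ℕ} (hp : p.Prime) {K : Type*} [Group K] [Finite K]
    (hK : IsPGroup p K) (A : Subgroup K) [A.Normal]
    (hAab : ∀ a ∈ A, ∀ b ∈ A, a * b = b * a)
    (hAelem : ∀ a ∈ A, a ^ p = 1)
    (hAindex : A.index = p)
    (y z : K) (hy : y ∉ A) (hz : z ∉ A)
    (hcoset : y⁻¹ * z ∈ frattini K) :
    z ^ p = y ^ p := by
  classical
  have hN : A.Normal := inferInstance
  have hconjA : ∀ (k : K) (a : K), a ∈ A → k⁻¹ * a * k ∈ A := fun k a ha => by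
    simpa using hN.conj_mem a ha k⁻¹
  -- commutative group structure on A
  letI cgA : CommGroup ↥A :=
    { (inferInstance : Group ↥A) with
      mul_comm := fun a b => Subtype.ext (hAab a a.2 b b.2) }
  -- conjugation by y as a monoid hom on A
  let F : ↥A →* ↥A := MonoidHom.mk' (fun a => ⟨y⁻¹ * ↑a * y, hconjA y ↑a a.2⟩)
    (fun a b => Subtype.ext (by push_cast; group))
  have hFc : ∀ a : ↥A, ((F a : K)) = y⁻¹ * ↑a * y := fun a => rfl
  -- card of quotient
  have hcardQ : Nat.card (K ⧸ A) = p := by rw [← hAindex]; rfl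
  have hpow_mem : ∀ x : K, x ^ p ∈ A := by
    intro x
    have h1 : ((x : K ⧸ A)) ^ p = 1 := by rw [← hcardQ]; exact pow_card_eq_one'
    rw [← QuotientGroup.mk_pow, QuotientGroup.eq_one_iff] at h1
    exact h1
  have hiter : ∀ (i : ℕ) (a : ↥A), ((⇑F)^[i] a : K) = (y ^ i)⁻¹ * ↑a * y ^ i := by
    intro i
    induction i with
    | zero => intro a; simp
    | succ n ih =>
      intro a
      rw [Function.iterate_succ_apply', hFc, ih, pow_succ]
      group
  have hiter_fix : ∀ a : ↥A, (⇑F)^[p] a = a := by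
    intro a
    apply Subtype.ext
    rw [hiter]
    have h := hAab (y ^ p) (hpow_mem y) ↑a a.2
    rw [mul_assoc, ← h, inv_mul_cancel_left]
  -- the norm map
  set N : ↥A → ↥A := fun a => ∏ i ∈ Finset.range p, (⇑F)^[i] a with hNdef
  have hiter_mul : ∀ (i : ℕ) (a b : ↥A), (⇑F)^[i] (a * b) = (⇑F)^[i] a * (⇑F)^[i] b := by
    intro i a b
    induction i with
    | zero => rfl
    | succ n ih =>
      rw [Function.iterate_succ_apply', Function.iterate_succ_apply',
        Function.iterate_succ_apply', ih, map_mul]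
  have hN_mul : ∀ a b : ↥A, N (a * b) = N a * N b := by
    intro a b
    simp only [hNdef]
    rw [← Finset.prod_mul_distrib]
    exact Finset.prod_congr rfl fun i _ => hiter_mul i a b
  have hN_one : N 1 = 1 := by
    simp only [hNdef]
    apply Finset.prod_eq_one
    intro i _
    exact Function.iterate_fixed (map_one F) i
  have hN_inv : ∀ a : ↥A, N a⁻¹ = (N a)⁻¹ := by
    intro a
    apply eq_inv_of_mul_eq_one_left
    rw [← hN_mul, inv_mul_cancel, hN_one]
  have hN_F : ∀ a : ↥A, N (F a) = N a := by
    intro a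
    have key : N (F a) * ((⇑F)^[0] a) = N a * ((⇑F)^[p] a) := by
      simp only [hNdef]
      have h1 : ∀ i ∈ Finset.range p, (⇑F)^[i] (F a) = (⇑F)^[i + 1] a :=
        fun i _ => (Function.iterate_succ_apply F i a).symm
      rw [Finset.prod_congr rfl h1, ← Finset.prod_range_succ]
      exact (Finset.prod_range_succ' (fun i => (⇑F)^[i] a) p).symm
    rw [Function.iterate_zero_apply, hiter_fix a] at key
    exact mul_right_cancel key
  have hN_fixed : ∀ a : ↥A, F a = a → N a = a ^ p := by
    intro a ha
    simp only [hNdef]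
    rw [Finset.prod_congr rfl fun i _ => Function.iterate_fixed ha i,
      Finset.prod_const, Finset.card_range]
  have hApow : ∀ a : ↥A, a ^ p = 1 := by
    intro a
    apply Subtype.ext
    push_cast
    exact hAelem ↑a a.2
  -- power formula
  have hpowf : ∀ (n : ℕ) (a : ↥A),
      (y * ↑a) ^ n = y ^ n * ↑(∏ i ∈ Finset.range n, (⇑F)^[i] a) := by
    intro n a
    induction n with
    | zero => simp
    | succ n ih =>
      have hprodstep : (∏ i ∈ Finset.range (n + 1), (⇑F)^[i] a)
          = F (∏ i ∈ Finset.range n, (⇑F)^[i] a) * a := by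
        rw [map_prod, Finset.prod_range_succ']
        congr 1
        exact Finset.prod_congr rfl fun i _ => Function.iterate_succ_apply' F i a
      rw [pow_succ, ih, pow_succ, hprodstep]
      push_cast
      rw [hFc]
      group
  -- the subgroup S = elements of A with trivial norm
  let S : Subgroup K :=
    { carrier := {k : K | ∃ h : k ∈ A, N ⟨k, h⟩ = 1}
      one_mem' := ⟨A.one_mem, by
        rw [show (⟨1, A.one_mem⟩ : ↥A) = 1 from rfl]; exact hN_one⟩
      mul_mem' := by
        rintro a b ⟨ha, hNa⟩ ⟨hb, hNb⟩
        refine ⟨A.mul_mem ha hb, ?_⟩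
        rw [show (⟨a * b, A.mul_mem ha hb⟩ : ↥A) = ⟨a, ha⟩ * ⟨b, hb⟩ from rfl,
          hN_mul, hNa, hNb, mul_one]
      inv_mem' := by
        rintro a ⟨ha, hNa⟩
        refine ⟨A.inv_mem ha, ?_⟩
        rw [show (⟨a⁻¹, A.inv_mem ha⟩ : ↥A) = (⟨a, ha⟩ : ↥A)⁻¹ from rfl,
          hN_inv, hNa, inv_one] }
  have hSmem : ∀ {k : K}, k ∈ S ↔ ∃ h : k ∈ A, N ⟨k, h⟩ = 1 := fun {k} => Iff.rfl
  -- A together with y generates K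
  have hcoatom : IsCoatom A := myIsCoatom hp hAindex
  have hsupA : A ⊔ Subgroup.zpowers y = ⊤ := by
    apply hcoatom.2
    apply lt_of_le_of_ne le_sup_left
    intro h
    have hymem : y ∈ A ⊔ Subgroup.zpowers y :=
      Subgroup.mem_sup_right (Subgroup.mem_zpowers y)
    rw [← h] at hymem
    exact hy hymem
  -- the norm is invariant under conjugation
  have hTsub : ∀ k : K, ∀ (a : ↥A) (hm : k⁻¹ * ↑a * k ∈ A), N ⟨k⁻¹ * ↑a * k, hm⟩ = N a := by
    let T : Subgroup K :=
      { carrier := {k : K | ∀ (a : ↥A) (hm : k⁻¹ * ↑a * k ∈ A), N ⟨k⁻¹ * ↑a * k, hm⟩ = N a}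
        one_mem' := by
          intro a hm
          congr 1
          exact Subtype.ext (by simp)
        mul_mem' := by
          intro k l hk hl a hm
          have hk' : ∀ (a : ↥A) (hm : k⁻¹ * ↑a * k ∈ A), N ⟨k⁻¹ * ↑a * k, hm⟩ = N a := hk
          have hl' : ∀ (a : ↥A) (hm : l⁻¹ * ↑a * l ∈ A), N ⟨l⁻¹ * ↑a * l, hm⟩ = N a := hl
          have h1 : k⁻¹ * ↑a * k ∈ A := hconjA k ↑a a.2
          have h2 : l⁻¹ * ↑(⟨k⁻¹ * ↑a * k, h1⟩ : ↥A) * l ∈ A := hconjA l _ h1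
          have e : (⟨(k * l)⁻¹ * ↑a * (k * l), hm⟩ : ↥A)
              = ⟨l⁻¹ * ↑(⟨k⁻¹ * ↑a * k, h1⟩ : ↥A) * l, h2⟩ :=
            Subtype.ext (by
              show (k * l)⁻¹ * ↑a * (k * l) = l⁻¹ * (k⁻¹ * ↑a * k) * l
              group)
          rw [e, hl', hk']
        inv_mem' := by
          intro k hk a hm
          have hk' : ∀ (a : ↥A) (hm : k⁻¹ * ↑a * k ∈ A), N ⟨k⁻¹ * ↑a * k, hm⟩ = N a := hk
          have hb : k * ↑a * k⁻¹ ∈ A := by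
            have := hconjA k⁻¹ ↑a a.2
            simpa using this
          have h1 : k⁻¹ * ↑(⟨k * ↑a * k⁻¹, hb⟩ : ↥A) * k ∈ A := hconjA k _ hb
          have e1 : (⟨k⁻¹ * ↑(⟨k * ↑a * k⁻¹, hb⟩ : ↥A) * k, h1⟩ : ↥A) = a :=
            Subtype.ext (by
              show k⁻¹ * (k * ↑a * k⁻¹) * k = ↑a
              group)
          have e2 : (⟨(k⁻¹)⁻¹ * ↑a * k⁻¹, hm⟩ : ↥A) = ⟨k * ↑a * k⁻¹, hb⟩ :=
            Subtype.ext (by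
              show (k⁻¹)⁻¹ * ↑a * k⁻¹ = k * ↑a * k⁻¹
              group)
          rw [e2]
          exact (hk' _ h1).symm.trans (congrArg N e1) }
    have hAT : A ≤ T := by
      intro a' ha' a hm
      congr 1
      apply Subtype.ext
      show a'⁻¹ * ↑a * a' = ↑a
      rw [mul_assoc, hAab ↑a a.2 a' ha', inv_mul_cancel_left]
    have hyT : y ∈ T := by
      intro a hm
      have e : (⟨y⁻¹ * ↑a * y, hm⟩ : ↥A) = F a := Subtype.ext rfl
      rw [e]
      exact hN_F a
    have hTtop : (⊤ : Subgroup K) ≤ T := by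
      rw [← hsupA]
      exact sup_le hAT (Subgroup.zpowers_le.mpr hyT)
    exact fun k => hTtop (Subgroup.mem_top k)
  -- S is closed under conjugation
  have hSconj : ∀ s ∈ S, ∀ k : K, k⁻¹ * s * k ∈ S := by
    rintro s ⟨hs, hNs⟩ k
    refine ⟨hconjA k s hs, ?_⟩
    rw [hTsub k ⟨s, hs⟩ (hconjA k s hs)]
    exact hNs
  have hSconj' : ∀ s ∈ S, ∀ k : K, k * s * k⁻¹ ∈ S := by
    intro s hs k
    have := hSconj s hs k⁻¹
    simpa using this
  -- commutators with elements of A lie in S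
  have hUA : ∀ (g : K), ∀ a ∈ A, ⁅g, a⁆ ∈ S := by
    intro g a ha
    have h1 : g * a * g⁻¹ ∈ A := by
      have := hconjA g⁻¹ a ha
      simpa using this
    have hmemA : ⁅g, a⁆ ∈ A := by
      rw [commutatorElement_def]
      have : g * a * g⁻¹ * a⁻¹ ∈ A := A.mul_mem h1 (A.inv_mem ha)
      exact this
    refine ⟨hmemA, ?_⟩
    have e : (⟨⁅g, a⁆, hmemA⟩ : ↥A) = ⟨g * a * g⁻¹, h1⟩ * (⟨a, ha⟩ : ↥A)⁻¹ :=
      Subtype.ext (by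
        show ⁅g, a⁆ = g * a * g⁻¹ * a⁻¹
        rw [commutatorElement_def])
    rw [e, hN_mul, hN_inv]
    have e2 : (⟨g * a * g⁻¹, h1⟩ : ↥A) = ⟨g⁻¹⁻¹ * ↑(⟨a, ha⟩ : ↥A) * g⁻¹, by simpa using h1⟩ :=
      Subtype.ext (by show g * a * g⁻¹ = g⁻¹⁻¹ * a * g⁻¹; group)
    rw [e2, hTsub g⁻¹ ⟨a, ha⟩, mul_inv_cancel]
  -- for any g, the set of k with ⁅g,k⁆ ∈ S is a subgroup
  have hUsub : ∀ g : K, ∀ k : K, ⁅g, k⁆ ∈ S → ∀ l : K, ⁅g, l⁆ ∈ S → ⁅g, k * l⁆ ∈ S := by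
    intro g k hk l hl
    have e : ⁅g, k * l⁆ = ⁅g, k⁆ * (k * ⁅g, l⁆ * k⁻¹) := by
      simp only [commutatorElement_def]
      group
    rw [e]
    exact S.mul_mem hk (hSconj' _ hl k)
  have hUinv : ∀ g : K, ∀ k : K, ⁅g, k⁆ ∈ S → ⁅g, k⁻¹⁆ ∈ S := by
    intro g k hk
    have e : ⁅g, k⁻¹⁆ = k⁻¹ * ⁅g, k⁆⁻¹ * k := by
      simp only [commutatorElement_def]
      group
    rw [e]
    exact hSconj _ (S.inv_mem hk) k
  have hUtop : ∀ (g : K), (∀ a ∈ A, ⁅g, a⁆ ∈ S) → ⁅g, y⁆ ∈ S → ∀ k : K, ⁅g, k⁆ ∈ S := by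
    intro g hA' hy' k
    let U : Subgroup K :=
      { carrier := {k : K | ⁅g, k⁆ ∈ S}
        one_mem' := by
          show ⁅g, (1:K)⁆ ∈ S
          rw [commutatorElement_one_right]
          exact S.one_mem
        mul_mem' := fun {k} {l} hk hl => hUsub g k hk l hl
        inv_mem' := fun {k} hk => hUinv g k hk }
    have hUtop' : (⊤ : Subgroup K) ≤ U := by
      rw [← hsupA]
      exact sup_le (fun a ha => hA' a ha) (Subgroup.zpowers_le.mpr hy')
    exact hUtop' (Subgroup.mem_top k)
  have hyS : ∀ k : K, ⁅y, k⁆ ∈ S := by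
    apply hUtop y (hUA y)
    rw [commutatorElement_self]
    exact S.one_mem
  have hcommS : ∀ g k : K, ⁅g, k⁆ ∈ S := by
    intro g
    apply hUtop g (hUA g)
    rw [← commutatorElement_inv]
    exact S.inv_mem (hyS g)
  -- p-th powers lie in S
  have hpowS : ∀ x : K, x ^ p ∈ S := by
    intro x
    by_cases hx : x ∈ A
    · rw [hAelem x hx]
      exact S.one_mem
    · refine ⟨hpow_mem x, ?_⟩
      haveI := Fact.mk hp
      have hxq : ((x : K ⧸ A)) ≠ 1 := by
        rw [Ne, QuotientGroup.eq_one_iff]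
        exact hx
      have hordx : orderOf ((x : K) : K ⧸ A) = p :=
        orderOf_eq_prime (by rw [← hcardQ]; exact pow_card_eq_one') hxq
      have htop : Subgroup.zpowers ((x : K) : K ⧸ A) = ⊤ := by
        apply Subgroup.eq_top_of_card_eq
        rw [Nat.card_zpowers, hordx, hcardQ]
      obtain ⟨j, hj⟩ : ∃ j : ℤ, ((x : K) : K ⧸ A) ^ j = ((y : K) : K ⧸ A) :=
        Subgroup.mem_zpowers_iff.mp (htop ▸ Subgroup.mem_top _)
      have hb : y⁻¹ * x ^ j ∈ A := by
        have : ((y : K) : K ⧸ A) = ((x ^ j : K) : K ⧸ A) := by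
          rw [QuotientGroup.mk_zpow]
          exact hj.symm
        exact QuotientGroup.eq.mp this
      have h1 := hAab (x ^ p) (hpow_mem x) (y⁻¹ * x ^ j) hb
      have hxx : x ^ p * x ^ j = x ^ j * x ^ p := by group
      have h2 : x ^ p * y⁻¹ = y⁻¹ * x ^ p := by
        calc x ^ p * y⁻¹ = x ^ p * (y⁻¹ * x ^ j) * (x ^ j)⁻¹ := by group
          _ = (y⁻¹ * x ^ j) * x ^ p * (x ^ j)⁻¹ := by rw [h1]
          _ = y⁻¹ * (x ^ j * x ^ p) * (x ^ j)⁻¹ := by group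
          _ = y⁻¹ * (x ^ p * x ^ j) * (x ^ j)⁻¹ := by rw [hxx]
          _ = y⁻¹ * x ^ p := by group
      have hcomm : y⁻¹ * x ^ p * y = x ^ p := by
        rw [← h2]
        group
      have hFfix : F ⟨x ^ p, hpow_mem x⟩ = ⟨x ^ p, hpow_mem x⟩ := Subtype.ext hcomm
      rw [hN_fixed _ hFfix]
      exact hApow _
  -- S is normal, K ⧸ S is elementary abelian, so the frattini subgroup maps to 1
  haveI hSnormal : S.Normal := by
    constructor
    intro s hs k
    have := hSconj' s hs k
    exact this
  have hQcomm : ∀ a b : K ⧸ S, a * b = b * a := by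
    intro a b
    induction a using QuotientGroup.induction_on with | H g =>
    induction b using QuotientGroup.induction_on with | H h =>
    rw [← QuotientGroup.mk_mul, ← QuotientGroup.mk_mul, QuotientGroup.eq]
    have e : (g * h)⁻¹ * (h * g) = ⁅h⁻¹, g⁻¹⁆ := by
      rw [commutatorElement_def]
      group
    rw [e]
    exact hcommS h⁻¹ g⁻¹
  have hQelem : ∀ q : K ⧸ S, q ^ p = 1 := by
    intro q
    induction q using QuotientGroup.induction_on with | H g =>
    rw [← QuotientGroup.mk_pow, QuotientGroup.eq_one_iff]
    exact hpowS g
  have hfrat : frattini (K ⧸ S) = ⊥ := frattini_eq_bot_of_elemAb hp hQcomm hQelem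
  have hcS : y⁻¹ * z ∈ S := by
    have h1 := frattini_le_comap_frattini_of_surjective
      (φ := QuotientGroup.mk' S) (QuotientGroup.mk'_surjective S) hcoset
    rw [Subgroup.mem_comap, hfrat, Subgroup.mem_bot] at h1
    rwa [← QuotientGroup.eq_one_iff]
  -- conclusion
  obtain ⟨hcA, hNc⟩ := hcS
  have hz' : z = y * ↑(⟨y⁻¹ * z, hcA⟩ : ↥A) := by
    show z = y * (y⁻¹ * z)
    group
  rw [hz', hpowf p ⟨y⁻¹ * z, hcA⟩]
  rw [show (∏ i ∈ Finset.range p, (⇑F)^[i] (⟨y⁻¹ * z, hcA⟩ : ↥A)) = N ⟨y⁻¹ * z, hcA⟩ from rfl]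
  rw [hNc]
  simp
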